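/- The real 2×2 matrix M = [[2/β₁², √2·β₋₁/(β₁·β₂)], [−√2·β₋₁/(β₁·β₂), 2/β₁²]] is orthogonal, i.e. Mᵀ·M is the identity matrix. (This is the unitarity of the (ẽ,5)-cell matrix of the biunitary connection κ for the AH+1 subfactor.) -/

import Mathlib

open Matrix

/-- β₋₁ = √((9+√17)/2) -/
noncomputable def βm1 : ℝ := Real.sqrt ((9 + Real.sqrt 17) / 2)

/-- β₁ = √((5+√17)/2) -/
noncomputable def β₁ : ℝ := Real.sqrt ((5 + Real.sqrt 17) / 2)

/-- β₂ = √((3+√17)/2) -/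
noncomputable def β₂ : ℝ := Real.sqrt ((3 + Real.sqrt 17) / 2)

/-- The (ẽ,5)-cell matrix of the biunitary connection κ for AH+1. -/
noncomputable def M : Matrix (Fin 2) (Fin 2) ℝ :=
  !![2 / β₁ ^ 2, Real.sqrt 2 * βm1 / (β₁ * β₂);
     -(Real.sqrt 2) * βm1 / (β₁ * β₂), 2 / β₁ ^ 2]

lemma s17_pos : (0:ℝ) < Real.sqrt 17 := Real.sqrt_pos.mpr (by norm_num)

lemma β₁_pos : 0 < β₁ := Real.sqrt_pos.mpr (by positivity)

lemma β₂_pos : 0 < β₂ := Real.sqrt_pos.mpr (by positivity)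

lemma β₁_sq : β₁ ^ 2 = (5 + Real.sqrt 17) / 2 := Real.sq_sqrt (by positivity)

lemma β₂_sq : β₂ ^ 2 = (3 + Real.sqrt 17) / 2 := Real.sq_sqrt (by positivity)

lemma βm1_sq : βm1 ^ 2 = (9 + Real.sqrt 17) / 2 := Real.sq_sqrt (by positivity)

lemma s17_sq : Real.sqrt 17 ^ 2 = 17 := Real.sq_sqrt (by norm_num)

lemma s2_sq : Real.sqrt 2 ^ 2 = 2 := Real.sq_sqrt (by norm_num)

lemma key : 4 * (β₁ ^ 2 * β₂ ^ 2) + Real.sqrt 2 ^ 2 * βm1 ^ 2 * (β₁ ^ 2) ^ 2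
    = (β₁ ^ 2) ^ 2 * (β₁ ^ 2 * β₂ ^ 2) := by
  rw [β₁_sq, β₂_sq, βm1_sq, s2_sq]
  nlinarith [s17_sq]

/-- The (ẽ,5)-cell matrix of the connection κ for AH+1 is orthogonal. -/
theorem stmt_4 : Mᵀ * M = (1 : Matrix (Fin 2) (Fin 2) ℝ) := by
  have h1 := β₁_pos
  have h2 := β₂_pos
  have hs := β₁_sq
  have hs2 := β₂_sq
  have hsm := βm1_sq
  have h17 := s17_sq
  have h2' := s2_sq
  ext i j
  fin_cases i <;> fin_cases j <;>
    simp [M, Matrix.mul_apply, Fin.sum_univ_two, Matrix.one_apply, Matrix.transpose_apply, Matrix.vecHead, Matrix.vecTail] <;>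
    field_simp <;>
    first
      | ring1
      | (apply mul_left_cancel₀ (pow_ne_zero 2 h1.ne'); linear_combination key)
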